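/- arXiv:2501.15837 — 2 statements merged into one kernel-verified Lean document; each statement's English description precedes it below -/
import Mathlib

section
/- Let λ1, λ2, λ3, λ4 ∈ M be dominant weights satisfying λ1 + λ2 = λ3 + λ4 and, for every positive root α, |⟨λ1 − λ2, α^∨⟩| ≤ |⟨λ3 − λ4, α^∨⟩|. Assume moreover that both polytopes P_{λ1,λ2} and P_{λ3,λ4} are contained in the closed dominant chamber C_f. Then P_{λ3,λ4} ⊆ P_{λ1,λ2}. -/
open Set Module Function

/-- A root system: a root pairing whose roots span `M` and whose coroots span `N`
(the definition of `RootSystem` in the older Mathlib, which has since been removed). -/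
structure RootSystem (ι R M N : Type*) [CommRing R] [AddCommGroup M] [Module R M]
    [AddCommGroup N] [Module R N] extends RootPairing ι R M N where
  span_eq_top : Submodule.span R (range root) = ⊤
  span_eq_top' : Submodule.span R (range coroot) = ⊤

/-- `b : I → ι` indexes a base of simple roots of the root system `P`: the map is injective,
the simple roots are linearly independent, and every root is either a nonnegative or a
nonpositive integer combination of the simple roots. -/
structure RootSystem.IsBase {ι M N I : Type*} [Fintype I]
    [AddCommGroup M] [Module ℝ M] [AddCommGroup N] [Module ℝ N]
    (P : RootSystem ι ℝ M N) (b : I → ι) : Prop where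
  injective : Function.Injective b
  linearIndependent : LinearIndependent ℝ fun i : I => P.root (b i)
  exists_coeffs : ∀ j : ι,
    (∃ c : I → ℕ, P.root j = ∑ i, (c i : ℝ) • P.root (b i)) ∨
    (∃ c : I → ℕ, P.root j = - ∑ i, (c i : ℝ) • P.root (b i))

/-- The root indexed by `j` is a positive root with respect to the base `b`: it is a
nonnegative integer combination of the simple roots. -/
def RootSystem.IsPositiveRoot {ι M N I : Type*} [Fintype I]
    [AddCommGroup M] [Module ℝ M] [AddCommGroup N] [Module ℝ N]
    (P : RootSystem ι ℝ M N) (b : I → ι) (j : ι) : Prop :=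
  ∃ c : I → ℕ, P.root j = ∑ i, (c i : ℝ) • P.root (b i)

/-- A weight `x ∈ M` is dominant if its pairing with every simple coroot is nonnegative. -/
def RootSystem.IsDominant {ι M N I : Type*}
    [AddCommGroup M] [Module ℝ M] [AddCommGroup N] [Module ℝ N]
    (P : RootSystem ι ℝ M N) (b : I → ι) (x : M) : Prop :=
  ∀ i : I, 0 ≤ P.coroot' (b i) x

/-- The closed dominant (fundamental) chamber `C_f`. -/
def RootSystem.chamber {ι M N I : Type*}
    [AddCommGroup M] [Module ℝ M] [AddCommGroup N] [Module ℝ N]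
    (P : RootSystem ι ℝ M N) (b : I → ι) : Set M :=
  {x : M | P.IsDominant b x}

/-- The polytope `P_{λ,μ}`: the convex hull of the orbit-translate `{λ + w μ : w ∈ W}`. -/
def RootSystem.orbitPolytope {ι M N : Type*}
    [AddCommGroup M] [Module ℝ M] [AddCommGroup N] [Module ℝ N]
    (P : RootSystem ι ℝ M N) (lam mu : M) : Set M :=
  convexHull ℝ {x : M | ∃ w ∈ P.weylGroup, x = lam + w • mu}

section Aux

open RootPairing Finset

variable {ι M N I : Type*} [Fintype ι] [Fintype I]
    [AddCommGroup M] [Module ℝ M] [AddCommGroup N] [Module ℝ N]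
    (P : RootSystem ι ℝ M N) (b : I → ι)

/-- The Weyl group as a subgroup of linear automorphisms. -/
abbrev W0 : Subgroup (M ≃ₗ[ℝ] M) := Subgroup.closure (range P.reflection)

lemma refl_mem_W0 (j : ι) : P.reflection j ∈ W0 P := Subgroup.subset_closure ⟨j, rfl⟩

lemma RootSystem.rootForm_root_self_pos {ι M N : Type*} [Fintype ι] [AddCommGroup M]
    [Module ℝ M] [AddCommGroup N] [Module ℝ N] (P : RootSystem ι ℝ M N) (j : ι) :
    0 < P.RootForm (P.root j) (P.root j) := by
  rw [RootPairing.rootForm_root_self]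
  have h := Finset.single_le_sum (f := fun i => P.pairing j i * P.pairing j i)
    (fun i _ => mul_self_nonneg _) (Finset.mem_univ j)
  simp only [P.pairing_same] at h
  linarith

lemma RootSystem.isCrystallographic_iff {ι M N : Type*} [AddCommGroup M]
    [Module ℝ M] [AddCommGroup N] [Module ℝ N] (P : RootSystem ι ℝ M N) :
    P.IsCrystallographic ↔ ∀ i j, ∃ z : ℤ, (z : ℝ) = P.pairing i j := by
  unfold RootPairing.IsCrystallographic
  rw [RootPairing.isValuedIn_iff]
  simp

lemma span_simple_top (hb : P.IsBase b) :
    ⊤ ≤ Submodule.span ℝ (Set.range fun i => P.root (b i)) := by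
  rw [← P.span_eq_top]
  refine Submodule.span_le.mpr ?_
  rintro - ⟨j, rfl⟩
  rcases hb.exists_coeffs j with ⟨c, hc⟩ | ⟨c, hc⟩
  · rw [hc]
    exact Submodule.sum_mem _ fun i _ =>
      Submodule.smul_mem _ _ (Submodule.subset_span ⟨i, rfl⟩)
  · rw [hc]
    exact Submodule.neg_mem _ <| Submodule.sum_mem _ fun i _ =>
      Submodule.smul_mem _ _ (Submodule.subset_span ⟨i, rfl⟩)

/-- The simple roots as a basis of `M`. -/
noncomputable def bas (hb : P.IsBase b) : Basis I ℝ M :=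
  Module.Basis.mk hb.linearIndependent (span_simple_top P b hb)

@[simp] lemma bas_apply (hb : P.IsBase b) (i : I) : bas P b hb i = P.root (b i) :=
  Module.Basis.mk_apply _ _ _

lemma repr_of_pos (hb : P.IsBase b) {j : ι} (hj : P.IsPositiveRoot b j) :
    ∃ c : I → ℕ, ∀ i, (bas P b hb).repr (P.root j) i = c i := by
  obtain ⟨c, hc⟩ := hj
  refine ⟨c, fun i => ?_⟩
  have h : P.root j = ∑ k, ((c k : ℝ)) • bas P b hb k := by
    simpa only [bas_apply] using hc
  rw [h, Basis.repr_sum_self]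

lemma repr_nonneg_of_pos (hb : P.IsBase b) {j : ι} (hj : P.IsPositiveRoot b j) (i : I) :
    0 ≤ (bas P b hb).repr (P.root j) i := by
  obtain ⟨c, hc⟩ := repr_of_pos P b hb hj
  rw [hc i]
  positivity

/-- `v` is the vector of a positive root. -/
def PosV (v : M) : Prop := ∃ k, P.IsPositiveRoot b k ∧ P.root k = v

lemma posV_neg_false (hb : P.IsBase b) {v : M} (h1 : PosV P b v) (h2 : PosV P b (-v)) :
    False := by
  obtain ⟨k, hk, rfl⟩ := h1
  obtain ⟨k', hk', hkv⟩ := h2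
  have hz : ∀ i, (bas P b hb).repr (P.root k) i = 0 := by
    intro i
    have h1 := repr_nonneg_of_pos P b hb hk i
    have h2 := repr_nonneg_of_pos P b hb hk' i
    rw [hkv] at h2
    simp only [map_neg, Finsupp.coe_neg, Pi.neg_apply] at h2
    linarith
  have : P.root k = 0 := by
    have : (bas P b hb).repr (P.root k) = 0 := Finsupp.ext fun i => hz i
    simpa using congrArg (bas P b hb).repr.symm this
  exact P.ne_zero k this

lemma posV_or_negV (hb : P.IsBase b) (j : ι) :
    PosV P b (P.root j) ∨ PosV P b (-(P.root j)) := by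
  rcases hb.exists_coeffs j with ⟨c, hc⟩ | ⟨c, hc⟩
  · exact Or.inl ⟨j, ⟨c, hc⟩, rfl⟩
  · right
    refine ⟨P.reflectionPerm j j, ⟨c, ?_⟩, ?_⟩
    · rw [P.root_reflectionPerm, P.reflection_apply_self, hc, neg_neg]
    · rw [P.root_reflectionPerm, P.reflection_apply_self]

lemma pos_of_posV_root (hb : P.IsBase b) {k : ι} (h : PosV P b (P.root k)) :
    P.IsPositiveRoot b k := by
  obtain ⟨k', hk', hkk⟩ := h
  rwa [P.root.injective hkk] at hk'

lemma simple_pos (i : I) : P.IsPositiveRoot b (b i) := by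
  classical
  refine ⟨fun k => if k = i then 1 else 0, ?_⟩
  rw [Finset.sum_congr rfl (g := fun k => if k = i then P.root (b i) else 0)
    (fun k _ => by by_cases h : k = i <;> simp [h])]
  simp

lemma rootForm_comm (x y : M) : P.RootForm x y = P.RootForm y x := by
  simpa using P.rootForm_symmetric.eq x y

lemma two_mul_rootForm (x : M) (j : ι) :
    2 * P.RootForm x (P.root j) = P.coroot' j x * P.RootForm (P.root j) (P.root j) := by
  have h := P.rootForm_reflection_reflection_apply j x (P.root j)
  rw [P.reflection_apply_self, P.reflection_apply] at h
  simp only [map_sub, map_smul, map_neg, LinearMap.sub_apply, LinearMap.smul_apply,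
    smul_eq_mul, LinearMap.neg_apply] at h
  linarith

lemma rootForm_simple_nonneg {x : M} (hx : P.IsDominant b x) (i : I) :
    0 ≤ P.RootForm x (P.root (b i)) := by
  have h := two_mul_rootForm P x (b i)
  have h1 := P.rootForm_root_self_pos (b i)
  have h2 := hx i
  nlinarith

lemma rootForm_pos_nonneg {x : M} (hx : P.IsDominant b x) {j : ι}
    (hj : P.IsPositiveRoot b j) : 0 ≤ P.RootForm x (P.root j) := by
  obtain ⟨c, hc⟩ := hj
  rw [hc, map_sum]
  refine Finset.sum_nonneg fun i _ => ?_
  rw [map_smul, smul_eq_mul]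
  exact mul_nonneg (by positivity) (rootForm_simple_nonneg P b hx i)

lemma coroot'_nonneg_of_dominant {x : M} (hx : P.IsDominant b x) {j : ι}
    (hj : P.IsPositiveRoot b j) : 0 ≤ P.coroot' j x := by
  have h := two_mul_rootForm P x j
  have h1 := P.rootForm_root_self_pos j
  have h2 := rootForm_pos_nonneg P b hx hj
  nlinarith

lemma exists_simple_coroot_pos {j : ι} (hj : P.IsPositiveRoot b j) :
    ∃ i : I, 0 < P.coroot' (b i) (P.root j) := by
  obtain ⟨c, hc⟩ := hj
  have hBpos := P.rootForm_root_self_pos j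
  have hsum : P.RootForm (P.root j) (P.root j)
      = ∑ i, (c i : ℝ) * P.RootForm (P.root (b i)) (P.root j) := by
    have := congrArg (fun v => P.RootForm v (P.root j)) hc
    simpa only [map_sum, LinearMap.coe_sum, Finset.sum_apply, map_smul,
      LinearMap.smul_apply, smul_eq_mul] using this
  by_contra hcon
  push_neg at hcon
  have hle : ∀ i : I, P.RootForm (P.root (b i)) (P.root j) ≤ 0 := by
    intro i
    have h := two_mul_rootForm P (P.root j) (b i)
    have h1 := P.rootForm_root_self_pos (b i)
    have h2 := hcon i
    have hcomm := rootForm_comm P (P.root j) (P.root (b i))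
    nlinarith
  have : P.RootForm (P.root j) (P.root j) ≤ 0 := by
    rw [hsum]
    exact Finset.sum_nonpos fun i _ => mul_nonpos_of_nonneg_of_nonpos (by positivity) (hle i)
  linarith

lemma lequiv_mul_apply (u v : M ≃ₗ[ℝ] M) (x : M) : (u * v) x = u (v x) := rfl

lemma lequiv_inv_apply (u : M ≃ₗ[ℝ] M) (x : M) : u⁻¹ (u x) = x := u.symm_apply_apply x

lemma lequiv_apply_inv (u : M ≃ₗ[ℝ] M) (x : M) : u (u⁻¹ x) = x := u.apply_symm_apply x

lemma weyl_prop {w : M ≃ₗ[ℝ] M} (hw : w ∈ W0 P) :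
    ∀ j : ι, ∃ k, P.root k = w (P.root j) ∧ ∀ x : M, P.coroot' k (w x) = P.coroot' j x := by
  induction hw using Subgroup.closure_induction with
  | mem w hw =>
    obtain ⟨i, rfl⟩ := hw
    intro j
    refine ⟨P.reflectionPerm i j, (P.root_reflectionPerm i j), fun x => ?_⟩
    rw [P.coroot'_reflection, P.reflectionPerm_self]
  | one =>
    intro j
    exact ⟨j, rfl, fun x => rfl⟩
  | mul u v hu hv ihu ihv =>
    intro j
    obtain ⟨k1, hk1, hk1'⟩ := ihv j
    obtain ⟨k2, hk2, hk2'⟩ := ihu k1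
    refine ⟨k2, ?_, fun x => ?_⟩
    · rw [hk2, hk1, lequiv_mul_apply]
    · rw [lequiv_mul_apply, hk2', hk1']
  | inv u hu ih =>
    choose k hk hk' using ih
    have hinj : Function.Injective k := by
      intro a c hac
      apply P.root.injective
      apply u.injective
      rw [← hk a, ← hk c, hac]
    obtain ⟨hsurj⟩ := Finite.injective_iff_surjective.mp hinj |>.hasRightInverse
    intro j
    obtain ⟨j₀, hj₀⟩ := Finite.injective_iff_surjective.mp hinj j
    refine ⟨j₀, ?_, fun x => ?_⟩
    · have h1 : P.root (k j₀) = u (P.root j₀) := hk j₀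
      rw [hj₀] at h1
      rw [h1, lequiv_inv_apply]
    · have h2 := hk' j₀ (u⁻¹ x)
      rw [lequiv_apply_inv, hj₀] at h2
      exact h2.symm

lemma weyl_conj {w : M ≃ₗ[ℝ] M} (hw : w ∈ W0 P) (j : ι) :
    ∃ k, P.root k = w (P.root j) ∧ w * P.reflection j * w⁻¹ = P.reflection k := by
  obtain ⟨k, hk1, hk2⟩ := weyl_prop P hw j
  refine ⟨k, hk1, LinearEquiv.ext fun x => ?_⟩
  have hc : P.coroot' j (w⁻¹ x) = P.coroot' k x := by
    have := hk2 (w⁻¹ x)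
    rw [lequiv_apply_inv] at this
    exact this.symm
  calc (w * P.reflection j * w⁻¹) x
      = w (P.reflection j (w⁻¹ x)) := rfl
    _ = w (w⁻¹ x - P.coroot' j (w⁻¹ x) • P.root j) := by rw [P.reflection_apply]
    _ = x - P.coroot' k x • (w (P.root j)) := by
        rw [map_sub, map_smul, lequiv_apply_inv, hc]
    _ = P.reflection k x := by rw [P.reflection_apply, hk1]

lemma pos_reflectionPerm (hred : P.IsReduced) (hb : P.IsBase b) (i : I) {j : ι}
    (hj : P.IsPositiveRoot b j) (hne : P.root j ≠ P.root (b i)) :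
    P.IsPositiveRoot b (P.reflectionPerm (b i) j) := by
  classical
  obtain ⟨c, hc⟩ := repr_of_pos P b hb hj
  -- find k ≠ i with positive coefficient
  have hk : ∃ k : I, k ≠ i ∧ 0 < (c k : ℝ) := by
    by_contra hcon
    push_neg at hcon
    have hzero : ∀ k : I, k ≠ i → (c k : ℝ) = 0 := fun k hki =>
      le_antisymm (hcon k hki) (by positivity)
    -- root j = (c i) • root (b i)
    have hcol : P.root j = (c i : ℝ) • P.root (b i) := by
      have hrepr : ∀ k, (bas P b hb).repr (P.root j) k = (c k : ℝ) := hc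
      have hsr : P.root j = ∑ k, ((bas P b hb).repr (P.root j) k) • bas P b hb k :=
        ((bas P b hb).sum_repr (P.root j)).symm
      rw [hsr, Finset.sum_congr rfl (g := fun k => if k = i then (c i : ℝ) • P.root (b i) else 0)
        (fun k _ => by
          by_cases h : k = i
          · subst h; rw [hrepr, bas_apply]; simp
          · rw [hrepr, hzero k h, bas_apply]; simp [h])]
      simp
    have hci : (c i : ℝ) ≠ 0 := by
      intro h
      rw [h, zero_smul] at hcol
      exact P.ne_zero j hcol
    have hdep : ¬ LinearIndependent ℝ ![P.root (b i), P.root j] := by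
      rw [linearIndependent_fin2]
      push_neg
      intro _
      refine ⟨(c i : ℝ)⁻¹, ?_⟩
      simp only [Matrix.cons_val_one, Matrix.head_cons, Matrix.cons_val_zero]
      rw [hcol, smul_smul, inv_mul_cancel₀ hci, one_smul]
    rcases hred.eq_or_eq_neg (b i) j hdep with h | h
    · exact hne h.symm
    · rw [h, smul_neg] at hcol
      have hz : (1 + (c i : ℝ)) • P.root j = 0 := by
        rw [add_smul, one_smul]
        nth_rewrite 1 [hcol]
        abel
      have : P.root j = 0 := by
        have h1 : (1 + (c i : ℝ)) ≠ 0 := by positivity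
        exact (smul_eq_zero.mp hz).resolve_left h1
      exact P.ne_zero j this
  obtain ⟨k, hki, hck⟩ := hk
  -- coefficient of reflected root at k is positive
  have hjrefl : P.root (P.reflectionPerm (b i) j)
      = P.root j - P.pairing j (b i) • P.root (b i) := by
    rw [P.root_reflectionPerm, P.reflection_apply_root]
  have hreprk : 0 < (bas P b hb).repr (P.root (P.reflectionPerm (b i) j)) k := by
    rw [hjrefl, map_sub, map_smul]
    have h1 : (bas P b hb).repr (P.root (b i)) k = 0 := by
      have h2 : P.root (b i) = bas P b hb i := (bas_apply P b hb i).symm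
      rw [h2, Basis.repr_self]
      simp [Finsupp.single_apply, (Ne.symm hki)]
    simp only [Finsupp.coe_sub, Finsupp.coe_smul, Pi.sub_apply, Pi.smul_apply, h1,
      smul_eq_mul, mul_zero, sub_zero]
    rw [hc k]
    exact hck
  rcases posV_or_negV P b hb (P.reflectionPerm (b i) j) with h | h
  · exact pos_of_posV_root P b hb h
  · exfalso
    obtain ⟨k', hk', hkk'⟩ := h
    have := repr_nonneg_of_pos P b hb hk' k
    rw [hkk'] at this
    simp only [map_neg, Finsupp.coe_neg, Pi.neg_apply] at this
    linarith

/-- Subgroup generated by the simple reflections. -/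
noncomputable def Wsimple : Subgroup (M ≃ₗ[ℝ] M) :=
  Subgroup.closure (Set.range fun i : I => P.reflection (b i))

lemma Wsimple_le_weylGroup : Wsimple P b ≤ W0 P := by
  refine (Subgroup.closure_le _).mpr ?_
  rintro - ⟨i, rfl⟩
  exact refl_mem_W0 P (b i)

/-- reflection in `-α` equals reflection in `α`. -/
lemma reflection_negIdx (j : ι) : P.reflection (P.reflectionPerm j j) = P.reflection j := by
  refine LinearEquiv.ext fun x => ?_
  have hroot : P.root (P.reflectionPerm j j) = -(P.root j) := by
    rw [P.root_reflectionPerm, P.reflection_apply_self]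
  have hcorx : P.coroot' (P.reflectionPerm j j) x = -(P.coroot' j x) := by
    rw [← P.coroot'_reflection, P.reflection_apply, map_sub, map_smul]
    have h2 : P.coroot' j (P.root j) = 2 := by
      rw [P.root_coroot'_eq_pairing, P.pairing_same]
    rw [h2]
    simp only [smul_eq_mul]
    ring
  rw [P.reflection_apply, P.reflection_apply, hroot, hcorx, neg_smul, smul_neg, neg_neg]

/-- the real height functional. -/
noncomputable def hgt (hb : P.IsBase b) : M →ₗ[ℝ] ℝ := (bas P b hb).sumCoords

lemma hgt_simple (hb : P.IsBase b) (i : I) : hgt P b hb (P.root (b i)) = 1 := by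
  rw [hgt, ← bas_apply P b hb i]
  exact Basis.sumCoords_self_apply _ _

lemma hgt_pos_root (hb : P.IsBase b) {j : ι} (hj : P.IsPositiveRoot b j) :
    ∃ n : ℕ, (n : ℝ) = hgt P b hb (P.root j) ∧ 1 ≤ n := by
  obtain ⟨c, hc⟩ := hj
  have h2 : hgt P b hb (P.root j) = ∑ i, (c i : ℝ) := by
    rw [hc, map_sum]
    refine Finset.sum_congr rfl fun i _ => ?_
    rw [map_smul, smul_eq_mul, hgt_simple P b hb i, mul_one]
  refine ⟨∑ i, c i, by rw [h2]; push_cast; rfl, ?_⟩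
  rw [Nat.one_le_iff_ne_zero]
  intro h0
  have hz : ∀ i ∈ Finset.univ, c i = 0 := fun i _ => by
    have := Finset.sum_eq_zero_iff.mp h0 i (Finset.mem_univ i)
    exact this
  apply P.ne_zero j
  rw [hc]
  refine Finset.sum_eq_zero fun i _ => ?_
  rw [hz i (Finset.mem_univ i)]
  simp

lemma reflection_mem_Wsimple_of_pos (hcrys : P.IsCrystallographic) (hred : P.IsReduced)
    (hb : P.IsBase b) :
    ∀ n : ℕ, ∀ j : ι, P.IsPositiveRoot b j → hgt P b hb (P.root j) < n →
      P.reflection j ∈ Wsimple P b := by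
  intro n
  induction n with
  | zero =>
    intro j hj hlt
    obtain ⟨m, hm, hm1⟩ := hgt_pos_root P b hb hj
    rw [← hm] at hlt
    have : (0:ℝ) ≤ m := by positivity
    norm_num at hlt
    linarith
  | succ n IH =>
    intro j hj hlt
    by_cases hsimple : ∃ i : I, P.root j = P.root (b i)
    · obtain ⟨i, hi⟩ := hsimple
      have : j = b i := P.root.injective hi
      rw [this]
      exact Subgroup.subset_closure ⟨i, rfl⟩
    · push_neg at hsimple
      obtain ⟨i, hipos⟩ := exists_simple_coroot_pos P b hj
      set j' := P.reflectionPerm (b i) j with hj'def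
      have hj'pos : P.IsPositiveRoot b j' :=
        pos_reflectionPerm P b hred hb i hj (hsimple i)
      -- height drops by at least 1
      have hpair : P.coroot' (b i) (P.root j) = P.pairing j (b i) :=
        P.root_coroot'_eq_pairing (b i) j
      obtain ⟨z, hz⟩ := P.isCrystallographic_iff.mp hcrys j (b i)
      have hz1 : (1:ℝ) ≤ P.pairing j (b i) := by
        have hzpos : (0:ℝ) < z := by rw [hz, ← hpair]; exact hipos
        have : (1:ℤ) ≤ z := by exact_mod_cast hzpos
        calc (1:ℝ) ≤ (z:ℝ) := by exact_mod_cast this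
          _ = _ := hz
      have hhgt : hgt P b hb (P.root j') = hgt P b hb (P.root j) - P.pairing j (b i) := by
        rw [hj'def, P.root_reflectionPerm, P.reflection_apply_root, map_sub, map_smul,
          smul_eq_mul, hgt_simple P b hb i, mul_one]
      have hlt' : hgt P b hb (P.root j') < n := by
        rw [hhgt]
        have : hgt P b hb (P.root j) < n + 1 := by exact_mod_cast hlt
        linarith
      have hrefl' : P.reflection j' ∈ Wsimple P b := IH j' hj'pos hlt'
      -- conjugation
      obtain ⟨k, hk1, hk2⟩ := weyl_conj P (refl_mem_W0 P (b i)) j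
      have hkj' : k = j' := by
        apply P.root.injective
        rw [hk1, hj'def, P.root_reflectionPerm]
      rw [hkj'] at hk2
      have hgen : P.reflection (b i) ∈ Wsimple P b := Subgroup.subset_closure ⟨i, rfl⟩
      have heq : P.reflection j =
          (P.reflection (b i))⁻¹ * P.reflection j' * P.reflection (b i) := by
        rw [← hk2]
        group
      rw [heq]
      exact Subgroup.mul_mem _ (Subgroup.mul_mem _ (Subgroup.inv_mem _ hgen) hrefl') hgen

lemma reflection_mem_Wsimple (hcrys : P.IsCrystallographic) (hred : P.IsReduced)
    (hb : P.IsBase b) (j : ι) : P.reflection j ∈ Wsimple P b := by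
  rcases posV_or_negV P b hb j with h | h
  · have hj := pos_of_posV_root P b hb h
    obtain ⟨m, hm, _⟩ := hgt_pos_root P b hb hj
    refine reflection_mem_Wsimple_of_pos P b hcrys hred hb (m+1) j hj ?_
    rw [← hm]
    exact_mod_cast Nat.lt_succ_self m
  · obtain ⟨k, hk, hkk⟩ := h
    have hkneg : k = P.reflectionPerm j j := by
      apply P.root.injective
      rw [hkk, P.root_reflectionPerm, P.reflection_apply_self]
    have h1 : P.reflection k ∈ Wsimple P b := by
      obtain ⟨m, hm, _⟩ := hgt_pos_root P b hb hk
      refine reflection_mem_Wsimple_of_pos P b hcrys hred hb (m+1) k hk ?_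
      rw [← hm]
      exact_mod_cast Nat.lt_succ_self m
    rwa [hkneg, reflection_negIdx] at h1

lemma weylGroup_le_Wsimple (hcrys : P.IsCrystallographic) (hred : P.IsReduced)
    (hb : P.IsBase b) : W0 P ≤ Wsimple P b := by
  refine (Subgroup.closure_le _).mpr ?_
  rintro - ⟨j, rfl⟩
  exact reflection_mem_Wsimple P b hcrys hred hb j

/-- Product of simple reflections along a word. -/
noncomputable def prodRefl (L : List I) : M ≃ₗ[ℝ] M :=
  (L.map fun i => P.reflection (b i)).prod

@[simp] lemma prodRefl_nil : prodRefl P b ([] : List I) = 1 := rfl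

lemma prodRefl_cons (i : I) (T : List I) :
    prodRefl P b (i :: T) = P.reflection (b i) * prodRefl P b T := by
  simp [prodRefl]

lemma prodRefl_concat (T : List I) (i : I) :
    prodRefl P b (T.concat i) = prodRefl P b T * P.reflection (b i) := by
  simp [prodRefl, List.concat_eq_append]

lemma prodRefl_mem (L : List I) : prodRefl P b L ∈ W0 P := by
  refine Subgroup.list_prod_mem _ fun x hx => ?_
  obtain ⟨i, -, rfl⟩ := List.mem_map.mp hx
  exact refl_mem_W0 P (b i)

lemma exists_word (hcrys : P.IsCrystallographic) (hred : P.IsReduced) (hb : P.IsBase b)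
    {w : M ≃ₗ[ℝ] M} (hw : w ∈ W0 P) : ∃ L : List I, prodRefl P b L = w := by
  have hw' : w ∈ Wsimple P b := weylGroup_le_Wsimple P b hcrys hred hb hw
  clear hw
  induction hw' using Subgroup.closure_induction with
  | mem x hx =>
    obtain ⟨i, rfl⟩ := hx
    exact ⟨[i], by simp [prodRefl]⟩
  | one => exact ⟨[], rfl⟩
  | mul x y hx hy ihx ihy =>
    obtain ⟨L1, h1⟩ := ihx
    obtain ⟨L2, h2⟩ := ihy
    exact ⟨L1 ++ L2, by rw [prodRefl, List.map_append, List.prod_append, ← prodRefl, ← prodRefl, h1, h2]⟩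
  | inv x hx ih =>
    obtain ⟨L, hL⟩ := ih
    refine ⟨L.reverse, ?_⟩
    rw [← hL]
    clear hL hx
    induction L with
    | nil => simp
    | cons i T IHT =>
      rw [List.reverse_cons, ← List.concat_eq_append, prodRefl_concat, IHT, prodRefl_cons,
        mul_inv_rev, P.reflection_inv]

/-- Deletion lemma. -/
lemma deletion (hred : P.IsReduced) (hb : P.IsBase b) :
    ∀ (L : List I) (j : ι), P.IsPositiveRoot b j →
      PosV P b (-((prodRefl P b L) (P.root j))) →
      ∃ L' : List I, L'.length + 1 = L.length ∧
        prodRefl P b L * P.reflection j = prodRefl P b L' := by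
  intro L
  induction L with
  | nil =>
    intro j hj hneg
    exfalso
    simp only [prodRefl_nil] at hneg
    exact posV_neg_false P b hb ⟨j, hj, rfl⟩ hneg
  | cons i T IH =>
    intro j hj hneg
    have hu : prodRefl P b T ∈ W0 P := prodRefl_mem P b T
    obtain ⟨k, hk, _⟩ := weyl_prop P hu j
    rcases posV_or_negV P b hb k with hpv | hnv
    · -- u (root j) is positive; merging case
      have hkpos : P.IsPositiveRoot b k := pos_of_posV_root P b hb hpv
      -- (i :: T) (root j) = s_i (root k) is negative
      have hneg' : PosV P b (-(P.root (P.reflectionPerm (b i) k))) := by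
        have : (prodRefl P b (i :: T)) (P.root j)
            = P.reflection (b i) (P.root k) := by
          rw [prodRefl_cons, lequiv_mul_apply, ← hk]
        rw [P.root_reflectionPerm, ← this]
        exact hneg
      have hknotpos : ¬ P.IsPositiveRoot b (P.reflectionPerm (b i) k) := by
        intro hcontra
        exact posV_neg_false P b hb ⟨_, hcontra, rfl⟩ hneg'
      have hkbi : P.root k = P.root (b i) := by
        by_contra hne
        exact hknotpos (pos_reflectionPerm P b hred hb i hkpos hne)
      -- conjugation: u * refl j = s_i * u
      obtain ⟨k', hk1', hk2'⟩ := weyl_conj P hu j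
      have hk'bi : k' = b i := by
        apply P.root.injective
        rw [hk1', ← hk, hkbi]
      rw [hk'bi] at hk2'
      refine ⟨T, by simp, ?_⟩
      have hstep : prodRefl P b T * P.reflection j
          = P.reflection (b i) * prodRefl P b T := by
        calc prodRefl P b T * P.reflection j
            = (prodRefl P b T * P.reflection j * (prodRefl P b T)⁻¹) * prodRefl P b T := by
              group
          _ = P.reflection (b i) * prodRefl P b T := by rw [hk2']
      rw [prodRefl_cons, mul_assoc, hstep, ← mul_assoc]
      have hss : P.reflection (b i) * P.reflection (b i) = 1 := by
        rw [← sq]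
        exact P.reflection_sq (b i)
      rw [hss, one_mul]
    · -- u (root j) is negative; recurse
      have hneg2 : PosV P b (-((prodRefl P b T) (P.root j))) := by
        rwa [← hk]
      obtain ⟨T', hT'len, hT'⟩ := IH j hj hneg2
      refine ⟨i :: T', by simp [← hT'len], ?_⟩
      rw [prodRefl_cons, prodRefl_cons, mul_assoc, hT']

/-- The pillar: an element of the Weyl group sending all positive roots to
positive roots is the identity. -/
lemma eq_one_of_posV (hcrys : P.IsCrystallographic) (hred : P.IsReduced) (hb : P.IsBase b)
    {w : M ≃ₗ[ℝ] M} (hw : w ∈ W0 P)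
    (h : ∀ j, P.IsPositiveRoot b j → PosV P b (w (P.root j))) : w = 1 := by
  have hex : ∃ n : ℕ, ∃ L : List I, L.length = n ∧ prodRefl P b L = w := by
    obtain ⟨L, hL⟩ := exists_word P b hcrys hred hb hw
    exact ⟨L.length, L, rfl, hL⟩
  classical
  obtain ⟨L, hLlen, hLw⟩ := Nat.find_spec hex
  rcases List.eq_nil_or_concat L with rfl | ⟨T, i, rfl⟩
  · rw [← hLw]; rfl
  · exfalso
    -- w = prodRefl T * s_i
    have hwT : prodRefl P b T = w * P.reflection (b i) := by
      rw [← hLw, prodRefl_concat, mul_assoc]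
      have hss : P.reflection (b i) * P.reflection (b i) = 1 := by
        rw [← sq]; exact P.reflection_sq (b i)
      rw [hss, mul_one]
    have hposwi : PosV P b (w (P.root (b i))) := h (b i) (simple_pos P b i)
    have hnegT : PosV P b (-((prodRefl P b T) (P.root (b i)))) := by
      have : (prodRefl P b T) (P.root (b i)) = -(w (P.root (b i))) := by
        rw [hwT, lequiv_mul_apply, P.reflection_apply_self, map_neg]
      rw [this, neg_neg]
      exact hposwi
    obtain ⟨T', hT'len, hT'⟩ := deletion P b hred hb T (b i) (simple_pos P b i) hnegT
    rw [hwT, mul_assoc] at hT'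
    have hss : P.reflection (b i) * P.reflection (b i) = 1 := by
      rw [← sq]; exact P.reflection_sq (b i)
    rw [hss, mul_one] at hT'
    -- T' is a shorter word for w
    have hlt : T'.length < Nat.find hex := by
      rw [← hLlen]
      have hlen : (T.concat i).length = T.length + 1 := by simp
      omega
    exact Nat.find_min hex hlt ⟨T', rfl, hT'.symm⟩

open scoped Classical in
/-- The inversion set of `w`. -/
noncomputable def invSet (w : M ≃ₗ[ℝ] M) : Finset ι :=
  Finset.univ.filter fun j => P.IsPositiveRoot b j ∧ PosV P b (-(w (P.root j)))

open scoped Classical in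
lemma mem_invSet {w : M ≃ₗ[ℝ] M} {j : ι} :
    j ∈ invSet P b w ↔ P.IsPositiveRoot b j ∧ PosV P b (-(w (P.root j))) := by
  simp [invSet]

lemma invSet_card_step (hred : P.IsReduced) (hb : P.IsBase b) (i : I) {w : M ≃ₗ[ℝ] M}
    (hneg : PosV P b (-(w (P.root (b i))))) :
    (invSet P b (w * P.reflection (b i))).card + 1 = (invSet P b w).card := by
  classical
  set σ := P.reflectionPerm (b i) with hσ
  set w' := w * P.reflection (b i) with hw'
  have happly : ∀ j : ι, w' (P.root j) = w (P.root (σ j)) := by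
    intro j
    rw [hw', lequiv_mul_apply, ← P.root_reflectionPerm]
  -- the key transfer
  have hK : ∀ j : ι, P.IsPositiveRoot b j → j ≠ b i →
      P.IsPositiveRoot b (σ j) ∧ σ j ≠ b i := by
    intro j hj hji
    have hne : P.root j ≠ P.root (b i) := fun h => hji (P.root.injective h)
    refine ⟨pos_reflectionPerm P b hred hb i hj hne, fun hcon => ?_⟩
    -- σ j = b i would give root j = -α i, contradicting positivity
    have hrootj : P.root j = -(P.root (b i)) := by
      have h1 : P.root (σ j) = P.reflection (b i) (P.root j) := P.root_reflectionPerm _ _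
      rw [hcon] at h1
      have h2 := congrArg (P.reflection (b i)) h1
      rw [P.reflection_same, P.reflection_apply_self] at h2
      exact h2.symm
    exact posV_neg_false P b hb ⟨b i, simple_pos P b i, rfl⟩ ⟨j, hj, hrootj⟩
  have hcard : ((invSet P b w').erase (b i)).card = ((invSet P b w).erase (b i)).card := by
    refine Finset.card_bij' (fun j _ => σ j) (fun j _ => σ j) ?_ ?_ ?_ ?_
    · intro j hj
      rw [Finset.mem_erase, mem_invSet] at hj
      obtain ⟨hjne, hjpos, hjneg⟩ := hj
      obtain ⟨h1, h2⟩ := hK j hjpos hjne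
      rw [Finset.mem_erase, mem_invSet]
      refine ⟨h2, h1, ?_⟩
      rwa [← happly]
    · intro j hj
      rw [Finset.mem_erase, mem_invSet] at hj
      obtain ⟨hjne, hjpos, hjneg⟩ := hj
      obtain ⟨h1, h2⟩ := hK j hjpos hjne
      rw [Finset.mem_erase, mem_invSet]
      refine ⟨h2, h1, ?_⟩
      rw [happly (σ j), show σ (σ j) = j from P.reflectionPerm_self (b i) j]
      exact hjneg
    · intro j _
      exact P.reflectionPerm_self (b i) j
    · intro j _
      exact P.reflectionPerm_self (b i) j
  have hbi1 : b i ∉ invSet P b w' := by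
    rw [mem_invSet]
    rintro ⟨-, hcon⟩
    have : w' (P.root (b i)) = -(w (P.root (b i))) := by
      rw [hw', lequiv_mul_apply, P.reflection_apply_self, map_neg]
    rw [this, neg_neg] at hcon
    exact posV_neg_false P b hb hcon hneg
  have hbi2 : b i ∈ invSet P b w := (mem_invSet P b).mpr ⟨simple_pos P b i, hneg⟩
  calc (invSet P b w').card + 1
      = ((invSet P b w').erase (b i)).card + 1 := by
        rw [Finset.erase_eq_of_notMem hbi1]
    _ = ((invSet P b w).erase (b i)).card + 1 := by rw [hcard]
    _ = (invSet P b w).card := Finset.card_erase_add_one hbi2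

/-- If `w` maps every simple root to a positive root vector, it maps every positive
root to a positive root vector. -/
lemma posV_of_all_simple (hb : P.IsBase b) {w : M ≃ₗ[ℝ] M} (hw : w ∈ W0 P)
    (h : ∀ i : I, PosV P b (w (P.root (b i)))) {j : ι} (hj : P.IsPositiveRoot b j) :
    PosV P b (w (P.root j)) := by
  obtain ⟨m, hm, _⟩ := weyl_prop P hw j
  rw [← hm]
  -- coordinates of w (root j) are nonnegative
  have hcoord : ∀ l : I, 0 ≤ (bas P b hb).repr (P.root m) l := by
    intro l
    obtain ⟨c, hc⟩ := hj
    have hme : P.root m = ∑ i, (c i : ℝ) • (w (P.root (b i))) := by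
      rw [hm, hc, map_sum]
      refine Finset.sum_congr rfl fun i _ => ?_
      rw [map_smul]
    rw [hme, map_sum]
    simp only [map_smul, Finsupp.coe_smul, Finset.sum_apply, Pi.smul_apply, smul_eq_mul,
      Finsupp.coe_finset_sum]
    refine Finset.sum_nonneg fun i _ => mul_nonneg (by positivity) ?_
    obtain ⟨k, hk, hkk⟩ := h i
    rw [← hkk]
    exact repr_nonneg_of_pos P b hb hk l
  rcases posV_or_negV P b hb m with hp | hn
  · exact hp
  · exfalso
    obtain ⟨k', hk', hkk'⟩ := hn
    have hz : ∀ l, (bas P b hb).repr (P.root m) l = 0 := by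
      intro l
      have h1 := repr_nonneg_of_pos P b hb hk' l
      have h2 := hcoord l
      rw [hkk'] at h1
      simp only [map_neg, Finsupp.coe_neg, Pi.neg_apply] at h1
      linarith
    apply P.ne_zero m
    have : (bas P b hb).repr (P.root m) = 0 := Finsupp.ext fun l => hz l
    simpa using congrArg (bas P b hb).repr.symm this

/-- The orbit of a vector under the Weyl group. -/
def orb (v : M) : Set M := {x : M | ∃ w ∈ W0 P, x = w v}

lemma self_mem_orb (v : M) : v ∈ orb P v := ⟨1, one_mem _, rfl⟩

lemma smul_mem_hullOrb {u : M ≃ₗ[ℝ] M} (hu : u ∈ W0 P) {v x : M}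
    (hx : x ∈ convexHull ℝ (orb P v)) : u x ∈ convexHull ℝ (orb P v) := by
  have h1 : u x ∈ (u : M →ₗ[ℝ] M) '' (convexHull ℝ (orb P v)) := ⟨x, hx, rfl⟩
  rw [LinearMap.image_convexHull] at h1
  refine convexHull_mono ?_ h1
  rintro - ⟨-, ⟨w, hw, rfl⟩, rfl⟩
  exact ⟨u * w, mul_mem hu hw, rfl⟩

lemma sat_mem_hullOrb {v x : M} (hx : x ∈ convexHull ℝ (orb P v)) (j : ι) {t : ℝ}
    (h0 : 0 ≤ t) (h1 : t ≤ P.coroot' j x) :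
    x - t • P.root j ∈ convexHull ℝ (orb P v) := by
  set p := P.coroot' j x with hp
  have hs : P.reflection j x ∈ convexHull ℝ (orb P v) :=
    smul_mem_hullOrb P (refl_mem_W0 P j) hx
  rcases eq_or_lt_of_le (h0.trans h1) with hp0 | hppos
  · have ht0 : t = 0 := le_antisymm (by rw [← hp0] at h1; exact h1) h0
    rw [ht0, zero_smul, sub_zero]
    exact hx
  · have hkey : x - t • P.root j = (1 - t/p) • x + (t/p) • (P.reflection j x) := by
      rw [P.reflection_apply, ← hp, smul_sub, smul_smul, div_mul_cancel₀ t hppos.ne',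
        sub_smul, one_smul]
      abel
    rw [hkey]
    exact (convex_convexHull ℝ (orb P v)) hx hs
      (by rw [sub_nonneg]; exact div_le_one_of_le₀ h1 (le_of_lt hppos))
      (by positivity) (by ring)

/-- Main convexity claim: if `nu` and `mu` are dominant then `nu + w mu` lies in the
convex hull of the Weyl orbit of `nu + mu`. -/
lemma claimC (hcrys : P.IsCrystallographic) (hred : P.IsReduced) (hb : P.IsBase b)
    {mu nu : M} (hmu : P.IsDominant b mu) (hnu : P.IsDominant b nu) :
    ∀ (n : ℕ) (w : M ≃ₗ[ℝ] M), w ∈ W0 P → (invSet P b w).card = n →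
      nu + w mu ∈ convexHull ℝ (orb P (nu + mu)) := by
  intro n
  induction n using Nat.strong_induction_on with
  | _ n IH =>
    intro w hw hcard
    by_cases hex : ∃ i : I, PosV P b (-(w (P.root (b i))))
    · -- descent
      obtain ⟨i, hi⟩ := hex
      obtain ⟨g, hgpos, hg⟩ := hi
      set w' := w * P.reflection (b i) with hw'def
      have hw' : w' ∈ W0 P := mul_mem hw (refl_mem_W0 P (b i))
      have hstep := invSet_card_step P b hred hb i (w := w) ⟨g, hgpos, hg⟩
      rw [hcard, ← hw'def] at hstep
      have hq' : nu + w' mu ∈ convexHull ℝ (orb P (nu + mu)) :=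
        IH (invSet P b w').card (by omega) w' hw' rfl
      -- w mu = w' mu - c • root g
      set c := P.coroot' (b i) mu with hc
      have hc0 : 0 ≤ c := hmu i
      have hw'ai : w' (P.root (b i)) = P.root g := by
        rw [hw'def, lequiv_mul_apply, P.reflection_apply_self, map_neg, ← hg]
      have hwmu : w mu = w' mu - c • P.root g := by
        have h1 : w mu = w' (P.reflection (b i) mu) := by
          rw [hw'def, lequiv_mul_apply, P.reflection_same]
        rw [h1, P.reflection_apply, map_sub, map_smul, hw'ai, ← hc]
      -- pairing bound
      have hcor : P.coroot' g (w' mu) = c := by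
        obtain ⟨k, hk1, hk2⟩ := weyl_prop P hw' (b i)
        have hkg : k = g := P.root.injective (by rw [hk1, hw'ai])
        rw [← hkg] at *
        rw [hk2 mu, hc]
      have hbound : c ≤ P.coroot' g (nu + w' mu) := by
        rw [map_add, hcor]
        have := coroot'_nonneg_of_dominant P b hnu hgpos
        linarith
      have := sat_mem_hullOrb P hq' g hc0 hbound
      rw [show nu + w' mu - c • P.root g = nu + w mu by rw [hwmu]; abel] at this
      exact this
    · -- base case: w = 1
      push_neg at hex
      have hall : ∀ i : I, PosV P b (w (P.root (b i))) := by
        intro i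
        obtain ⟨m, hm, -⟩ := weyl_prop P hw (b i)
        rw [← hm]
        rcases posV_or_negV P b hb m with h | h
        · exact h
        · exfalso
          refine hex i ?_
          rw [← hm]
          exact h
      have hone : w = 1 :=
        eq_one_of_posV P b hcrys hred hb hw fun j hj =>
          posV_of_all_simple P b hb hw hall hj
      rw [hone]
      exact subset_convexHull ℝ _ (self_mem_orb P (nu + mu))

end Aux

/-- Schur positivity polytope containment under hypothesis (*) and deep
dominance. -/
theorem schur_polytope_subset {ι M N I : Type*} [Fintype ι] [Fintype I]
    [AddCommGroup M] [Module ℝ M] [AddCommGroup N] [Module ℝ N]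
    (P : RootSystem ι ℝ M N) (hcrys : P.IsCrystallographic) (hred : P.IsReduced)
    (b : I → ι) (hb : P.IsBase b)
    (lam1 lam2 lam3 lam4 : M)
    (h1 : P.IsDominant b lam1) (h2 : P.IsDominant b lam2)
    (h3 : P.IsDominant b lam3) (h4 : P.IsDominant b lam4)
    (hsum : lam1 + lam2 = lam3 + lam4)
    (hineq : ∀ j : ι, P.IsPositiveRoot b j →
      |P.coroot' j (lam1 - lam2)| ≤ |P.coroot' j (lam3 - lam4)|)
    (hP12 : P.orbitPolytope lam1 lam2 ⊆ P.chamber b)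
    (hP34 : P.orbitPolytope lam3 lam4 ⊆ P.chamber b) :
    P.orbitPolytope lam3 lam4 ⊆ P.orbitPolytope lam1 lam2 := by
  classical
  -- Step 1: lam3 - lam1 is dominant
  have hdom : P.IsDominant b (lam3 - lam1) := by
    intro i
    have hrefl : ∀ y : M, P.coroot' (b i) (P.reflection (b i) y)
        = -(P.coroot' (b i) y) := by
      intro y
      rw [RootPairing.reflection_apply, map_sub, map_smul]
      have h2 : P.coroot' (b i) (P.root (b i)) = 2 := by
        rw [P.root_coroot'_eq_pairing, P.pairing_same]
      rw [h2]
      simp only [smul_eq_mul]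
      ring
    have hm2 : lam1 + P.reflection (b i) lam2 ∈ P.chamber b :=
      hP12 (subset_convexHull ℝ _
        ⟨RootPairing.Equiv.reflection P.toRootPairing (b i), P.reflection_mem_weylGroup (b i), rfl⟩)
    have hm4 : lam3 + P.reflection (b i) lam4 ∈ P.chamber b :=
      hP34 (subset_convexHull ℝ _
        ⟨RootPairing.Equiv.reflection P.toRootPairing (b i), P.reflection_mem_weylGroup (b i), rfl⟩)
    have h12 : 0 ≤ P.coroot' (b i) (lam1 + P.reflection (b i) lam2) := hm2 i
    have h34 : 0 ≤ P.coroot' (b i) (lam3 + P.reflection (b i) lam4) := hm4 i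
    rw [map_add, hrefl lam2] at h12
    rw [map_add, hrefl lam4] at h34
    have hsum' : P.coroot' (b i) lam1 + P.coroot' (b i) lam2
        = P.coroot' (b i) lam3 + P.coroot' (b i) lam4 := by
      rw [← map_add, ← map_add, hsum]
    have habs := hineq (b i) (simple_pos P b i)
    rw [map_sub, map_sub, abs_of_nonneg (by linarith), abs_of_nonneg (by linarith)] at habs
    rw [map_sub]
    linarith
  -- Step 2: assemble via the convexity claim
  rw [RootSystem.orbitPolytope, RootSystem.orbitPolytope]
  refine convexHull_min ?_ (convex_convexHull ℝ _)
  rintro x ⟨w0, hw0, rfl⟩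
  have hw : RootPairing.Equiv.weightHom P.toRootPairing w0 ∈ W0 P := by
    rw [W0, ← RootPairing.range_weylGroup_weightHom P.toRootPairing]
    exact ⟨⟨w0, hw0⟩, rfl⟩
  set w := RootPairing.Equiv.weightHom P.toRootPairing w0
  change lam3 + w lam4 ∈ _
  have hkey := claimC P b hcrys hred hb h4 hdom ((invSet P b w).card) w hw rfl
  have h2eq : (lam3 - lam1) + lam4 = lam2 := by
    apply add_left_cancel (a := lam1)
    rw [hsum]
    abel
  rw [h2eq] at hkey
  have heq2 : lam3 + w lam4 = lam1 + ((lam3 - lam1) + w lam4) := by abel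
  rw [heq2]
  have himg : lam1 + ((lam3 - lam1) + w lam4) ∈
      (AffineEquiv.constVAdd ℝ M lam1).toAffineMap '' (convexHull ℝ (orb P lam2)) :=
    ⟨_, hkey, rfl⟩
  rw [AffineMap.image_convexHull] at himg
  refine convexHull_mono ?_ himg
  rintro - ⟨-, ⟨u, hu, rfl⟩, rfl⟩
  rw [W0, ← RootPairing.range_weylGroup_weightHom P.toRootPairing] at hu
  obtain ⟨⟨u', hu'⟩, rfl⟩ := hu
  exact ⟨u', hu', rfl⟩
end

section
/- Let λ1, λ2, λ3, λ4 ∈ M be dominant weights with λ1 + λ2 = λ3 + λ4, such that P_{λ1,λ2} ⊆ C_f, P_{λ3,λ4} ⊆ C_f, and P_{λ3,λ4} ⊆ P_{λ1,λ2}. Then ⟨λ3 − λ4, α_i^∨⟩ ≥ ⟨λ1 − λ2, α_i^∨⟩ for every i ∈ I, and consequently λ2 − λ4 is dominant, i.e. ⟨λ2 − λ4, α_i^∨⟩ ≥ 0 for all i ∈ I. -/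
open Set Module Function

section Aux
variable {ι M N : Type*} [Fintype ι]
    [AddCommGroup M] [Module ℝ M] [AddCommGroup N] [Module ℝ N]

lemma aux_rootForm_weyl_inv (P : RootPairing ι ℝ M N) {w : P.Aut}
    (hw : w ∈ P.weylGroup) (x y : M) :
    P.RootForm (w • x) (w • y) = P.RootForm x y := by
  induction hw using Subgroup.closure_induction generalizing x y with
  | mem r hr =>
    obtain ⟨i, rfl⟩ := hr
    exact P.rootForm_reflection_reflection_apply i x y
  | one => simp
  | mul g h hg hh ihg ihh =>
    show P.RootForm (g • (h • x)) (g • (h • y)) = P.RootForm x y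
    rw [ihg, ihh]
  | inv g hg ih =>
    have h := ih (g⁻¹ • x) (g⁻¹ • y)
    rw [show g • (g⁻¹ • x) = x from smul_inv_smul g x,
      show g • (g⁻¹ • y) = y from smul_inv_smul g y] at h
    exact h.symm

lemma aux_two_mul_rootForm (P : RootPairing ι ℝ M N) (j : ι) (x : M) :
    P.RootForm (P.root j) (P.root j) * P.coroot' j x = 2 * P.RootForm (P.root j) x := by
  have h := congrArg (fun z => P.toLinearMap.flip z x) (P.rootForm_self_smul_coroot j)
  simp only [map_smul, smul_eq_mul, map_nsmul, RootPairing.Polarization_apply, map_sum,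
    nsmul_eq_mul, Nat.cast_ofNat, RootPairing.rootForm_apply_apply,
    LinearMap.smul_apply, LinearMap.sum_apply] at h ⊢
  rw [h, Finset.mul_sum]
end Aux

/-- polytope containment `P_{λ3,λ4} ⊆ P_{λ1,λ2}` (with both inside `C_f` and
`λ1 + λ2 = λ3 + λ4`) forces `⟨λ3 − λ4, α_i^∨⟩ ≥ ⟨λ1 − λ2, α_i^∨⟩` for all `i`, and hence
`λ2 − λ4` is dominant. -/
theorem dominance_of_polytope_subset {ι M N I : Type*} [Fintype ι] [Fintype I]
    [AddCommGroup M] [Module ℝ M] [AddCommGroup N] [Module ℝ N]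
    (P : RootSystem ι ℝ M N) (hcrys : P.IsCrystallographic) (hred : P.IsReduced)
    (b : I → ι) (hb : P.IsBase b)
    (lam1 lam2 lam3 lam4 : M)
    (h1 : P.IsDominant b lam1) (h2 : P.IsDominant b lam2)
    (h3 : P.IsDominant b lam3) (h4 : P.IsDominant b lam4)
    (hsum : lam1 + lam2 = lam3 + lam4)
    (hP12 : P.orbitPolytope lam1 lam2 ⊆ P.chamber b)
    (hP34 : P.orbitPolytope lam3 lam4 ⊆ P.chamber b)
    (hsub : P.orbitPolytope lam3 lam4 ⊆ P.orbitPolytope lam1 lam2) :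
    (∀ i : I, P.coroot' (b i) (lam1 - lam2) ≤ P.coroot' (b i) (lam3 - lam4)) ∧
    (∀ i : I, 0 ≤ P.coroot' (b i) (lam2 - lam4)) := by
  have key : ∀ i : I, P.coroot' (b i) lam4 ≤ P.coroot' (b i) lam2 := by
    intro i
    set j : ι := b i with hj
    have ht0 : (0:ℝ) ≤ P.coroot' j lam4 := h4 i
    have hc0 : (0:ℝ) ≤ P.coroot' j lam2 := h2 i
    set t : ℝ := P.coroot' j lam4 with htdef
    set c : ℝ := P.coroot' j lam2 with hcdef
    -- the convex region
    set C : Set M := {z | P.RootForm (z - lam1) (z - lam1) ≤ P.RootForm lam2 lam2} with hCdef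
    have hconv : Convex ℝ C := by
      intro u hu v hv a a' ha ha' haa'
      simp only [hCdef, mem_setOf_eq] at hu hv ⊢
      set p : M := u - lam1 with hp
      set q : M := v - lam1 with hq
      have hexp : a • u + a' • v - lam1 = a • p + a' • q := by
        rw [hp, hq, smul_sub, smul_sub,
          show a • u - a • lam1 + (a' • v - a' • lam1)
              = a • u + a' • v - (a • lam1 + a' • lam1) from by abel,
          ← add_smul, haa', one_smul]
      rw [hexp]
      have e1 : P.RootForm (a • p + a' • q) (a • p + a' • q)
          = a*a*P.RootForm p p + a*a'*P.RootForm p q + a'*a*P.RootForm q p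
            + a'*a'*P.RootForm q q := by
        simp only [map_add, map_smul, LinearMap.add_apply, LinearMap.smul_apply, smul_eq_mul]
        ring
      have e2 : (0:ℝ) ≤ P.RootForm p p - P.RootForm p q - P.RootForm q p + P.RootForm q q := by
        have := P.zero_le_rootForm (p - q)
        simp only [map_sub, LinearMap.sub_apply] at this
        linarith
      rw [e1]
      have ha1 : a' = 1 - a := by linarith
      subst ha1
      nlinarith [mul_nonneg ha (sub_nonneg.mpr hu),
        mul_nonneg (by linarith : (0:ℝ) ≤ 1 - a) (sub_nonneg.mpr hv),
        mul_nonneg (mul_nonneg ha (by linarith : (0:ℝ) ≤ 1 - a)) e2]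
    have hgen : {x : M | ∃ w ∈ P.weylGroup, x = lam1 + w • lam2} ⊆ C := by
      rintro - ⟨w, hw, rfl⟩
      simp only [hCdef, mem_setOf_eq, add_sub_cancel_left]
      rw [aux_rootForm_weyl_inv P.toRootPairing hw]
    have hhull : P.orbitPolytope lam1 lam2 ⊆ C := convexHull_min hgen hconv
    have hxmem : lam3 + P.reflection j lam4 ∈ P.orbitPolytope lam3 lam4 :=
      subset_convexHull ℝ _ ⟨RootPairing.Equiv.reflection P.toRootPairing j, P.reflection_mem_weylGroup j, rfl⟩
    have hxC := hhull (hsub hxmem)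
    simp only [hCdef, mem_setOf_eq] at hxC
    have hz : lam3 + P.reflection j lam4 - lam1 = lam2 - t • P.root j := by
      rw [RootPairing.reflection_apply, ← htdef,
        show lam3 + (lam4 - t • P.root j) - lam1 = lam3 + lam4 - lam1 - t • P.root j from by abel,
        ← hsum]
      abel
    rw [hz] at hxC
    have hsym : P.RootForm lam2 (P.root j) = P.RootForm (P.root j) lam2 := by
      have := P.rootForm_symmetric.eq lam2 (P.root j)
      simpa using this
    have htwo := aux_two_mul_rootForm P.toRootPairing j lam2
    have haa : (0:ℝ) < P.RootForm (P.root j) (P.root j) :=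
      P.rootForm_pos_of_ne_zero (Submodule.subset_span ⟨j, rfl⟩) (P.ne_zero j)
    have hexp2 : P.RootForm (lam2 - t • P.root j) (lam2 - t • P.root j)
        = P.RootForm lam2 lam2 - t * P.RootForm lam2 (P.root j)
          - t * P.RootForm (P.root j) lam2
          + t * t * P.RootForm (P.root j) (P.root j) := by
      simp only [map_sub, map_smul, LinearMap.sub_apply, LinearMap.smul_apply, smul_eq_mul]
      ring
    rw [hexp2] at hxC
    rcases ht0.eq_or_lt with h | h
    · linarith
    · rw [← hcdef] at htwo
      nlinarith [mul_pos h haa]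
  refine ⟨fun i => ?_, fun i => ?_⟩
  · have hk := key i
    have hs := congrArg (P.coroot' (b i)) hsum
    simp only [map_add, map_sub] at hs ⊢
    linarith
  · have hk := key i
    simp only [map_sub]
    linarith
end
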